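/- The product in FPCM of two copies of the free monoid ℕ on one generator is the free commutative monoid on three generators. -/

import Mathlib

open CategoryTheory

/-- The elementary commutation relation on words generated by an independence relation. -/
def traceRel (E : Type) (I : Set (E × E)) : FreeMonoid E → FreeMonoid E → Prop :=
  fun x y => ∃ a b : E, (a, b) ∈ I ∧ x = FreeMonoid.of a * FreeMonoid.of b ∧
    y = FreeMonoid.of b * FreeMonoid.of a

/-- The congruence on the free monoid generated by commutation of independent pairs. -/
def traceCon (E : Type) (I : Set (E × E)) : Con (FreeMonoid E) := conGen (traceRel E I)

/-- The trace monoid `M(E,I)`. -/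
abbrev TraceMonoid (E : Type) (I : Set (E × E)) : Type := (traceCon E I).Quotient

/-- The canonical projection from words to traces. -/
def trcMk {E : Type} {I : Set (E × E)} : FreeMonoid E →* TraceMonoid E I :=
  (traceCon E I).mk'

/-- The generator of the trace monoid corresponding to an event `e`. -/
def trc {E : Type} {I : Set (E × E)} (e : E) : TraceMonoid E I :=
  trcMk (FreeMonoid.of e)

/-- `I` is an independence relation: irreflexive and symmetric. -/
structure IsIndep {E : Type} (I : Set (E × E)) : Prop where
  irrefl : ∀ a : E, (a, a) ∉ I
  symm : ∀ a b : E, (a, b) ∈ I → (b, a) ∈ I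

/-- A homomorphism of trace monoids is basic if it sends generators to generators or to `1`. -/
def IsBasic {E E' : Type} {I : Set (E × E)} {I' : Set (E' × E')}
    (f : TraceMonoid E I →* TraceMonoid E' I') : Prop :=
  ∀ e : E, (∃ e' : E', f (trc e) = trc e') ∨ f (trc e) = 1

/-- A basic homomorphism preserves independence. -/
def IsIndepPres {E E' : Type} {I : Set (E × E)} {I' : Set (E' × E')}
    (f : TraceMonoid E I →* TraceMonoid E' I') : Prop :=
  ∀ a b : E, (a, b) ∈ I → f (trc a) ≠ f (trc b) ∨ (f (trc a) = 1 ∧ f (trc b) = 1)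

/-- The monoid homomorphism out of a trace monoid induced by a map on generators whose
images commute at independent pairs. -/
def liftHom {E : Type} {I : Set (E × E)} {N : Type*} [Monoid N] (φ : E → N)
    (hφ : ∀ a b : E, (a, b) ∈ I → φ a * φ b = φ b * φ a) : TraceMonoid E I →* N :=
  (traceCon E I).lift (FreeMonoid.lift φ) (by
    apply Con.conGen_le.2
    rintro x y ⟨a, b, hab, rfl, rfl⟩
    rw [Con.ker_rel]
    simp only [map_mul, FreeMonoid.lift_eval_of]
    exact hφ a b hab)

@[simp] theorem liftHom_trc {E : Type} {I : Set (E × E)} {N : Type*} [Monoid N] (φ : E → N)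
    (hφ : ∀ a b : E, (a, b) ∈ I → φ a * φ b = φ b * φ a) (e : E) :
    liftHom φ hφ (trc (I := I) e) = φ e := by
  show (traceCon E I).lift _ _ ((traceCon E I).mk' (FreeMonoid.of e)) = φ e
  refine Eq.trans (Con.lift_mk' ..) ?_
  simp

theorem trc_comm {E : Type} {I : Set (E × E)} {a b : E} (h : (a, b) ∈ I) :
    (trc a : TraceMonoid E I) * trc b = trc b * trc a := by
  show trcMk (FreeMonoid.of a) * trcMk (FreeMonoid.of b) =
    trcMk (FreeMonoid.of b) * trcMk (FreeMonoid.of a)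
  rw [← map_mul, ← map_mul]
  exact (Con.eq _).2 (ConGen.Rel.of _ _ ⟨a, b, h, rfl, rfl⟩)

theorem isBasic_id {E : Type} {I : Set (E × E)} :
    IsBasic (MonoidHom.id (TraceMonoid E I)) := fun e => Or.inl ⟨e, rfl⟩

theorem isBasic_comp {E₁ E₂ E₃ : Type} {I₁ : Set (E₁ × E₁)} {I₂ : Set (E₂ × E₂)}
    {I₃ : Set (E₃ × E₃)} {f : TraceMonoid E₁ I₁ →* TraceMonoid E₂ I₂}
    {g : TraceMonoid E₂ I₂ →* TraceMonoid E₃ I₃} (hf : IsBasic f) (hg : IsBasic g) :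
    IsBasic (g.comp f) := by
  intro e
  rcases hf e with ⟨e', he⟩ | he
  · rcases hg e' with ⟨e'', he''⟩ | he''
    · exact Or.inl ⟨e'', by simp [MonoidHom.comp_apply, he, he'']⟩
    · exact Or.inr (by simp [MonoidHom.comp_apply, he, he''])
  · exact Or.inr (by simp [MonoidHom.comp_apply, he])
/-- An object of the category `FPCM`: a set of events with an independence relation. -/
structure FPCMObj where
  E : Type
  I : Set (E × E)
  indep : IsIndep I

/-- The category `FPCM` of trace monoids and basic homomorphisms. -/
instance : Category FPCMObj where
  Hom X Y := {f : TraceMonoid X.E X.I →* TraceMonoid Y.E Y.I // IsBasic f}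
  id _ := ⟨MonoidHom.id _, isBasic_id⟩
  comp f g := ⟨g.1.comp f.1, isBasic_comp f.2 g.2⟩
  id_comp _ := Subtype.ext (MonoidHom.comp_id _)
  comp_id _ := Subtype.ext (MonoidHom.id_comp _)
  assoc _ _ _ := Subtype.ext rfl

open CategoryTheory.Limits

/-- The trace monoid `ℕ` on one generator with empty independence relation. -/
def natFPCMObj : FPCMObj where
  E := Unit
  I := ∅
  indep := ⟨fun _ h => h, fun _ _ h => h⟩

/-- The free commutative monoid on three generators, as an object of `FPCM`. -/
def freeComm3 : FPCMObj where
  E := Fin 3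
  I := {p | p.1 ≠ p.2}
  indep := ⟨fun _ h => h rfl, fun _ _ h e => h e.symm⟩

/- ### Auxiliary machinery -/

theorem traceHom_ext {E : Type} {I : Set (E × E)} {N : Type*} [Monoid N]
    {f g : TraceMonoid E I →* N} (h : ∀ e, f (trc e) = g (trc e)) : f = g := by
  have key : f.comp trcMk = g.comp trcMk := FreeMonoid.hom_eq h
  refine MonoidHom.ext fun x => ?_
  obtain ⟨w, rfl⟩ := Con.mk'_surjective x
  exact DFunLike.congr_fun key w

theorem trc_ne_one {E : Type} {I : Set (E × E)} (e : E) :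
    (trc e : TraceMonoid E I) ≠ 1 := by
  intro h
  have := congrArg (liftHom (fun _ : E => Multiplicative.ofAdd (1 : ℕ))
    (fun _ _ _ => mul_comm _ _)) h
  simp only [liftHom_trc, map_one] at this
  simp at this

abbrev NatTM : Type := TraceMonoid Unit (∅ : Set (Unit × Unit))
abbrev F3M : Type := TraceMonoid (Fin 3) {p : Fin 3 × Fin 3 | p.1 ≠ p.2}

theorem trcF3_comm (i j : Fin 3) : (trc i : F3M) * trc j = trc j * trc i := by
  rcases eq_or_ne i j with rfl | h
  · rfl
  · exact trc_comm h

theorem genlike_comm {x y : F3M} (hx : x = 1 ∨ ∃ i, x = trc i)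
    (hy : y = 1 ∨ ∃ j, y = trc j) : x * y = y * x := by
  rcases hx with rfl | ⟨i, rfl⟩
  · simp
  · rcases hy with rfl | ⟨j, rfl⟩
    · simp
    · exact trcF3_comm i j

/-- First projection `F3M →* NatTM`. -/
noncomputable def projOne : F3M →* NatTM :=
  liftHom (fun i => if i = 1 then 1 else trc ())
    (fun a b _ => by split_ifs <;> simp)

/-- Second projection `F3M →* NatTM`. -/
noncomputable def projTwo : F3M →* NatTM :=
  liftHom (fun i => if i = 0 then 1 else trc ())
    (fun a b _ => by split_ifs <;> simp)

@[simp] theorem projOne_trc (i : Fin 3) :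
    projOne (trc i) = if i = 1 then 1 else trc () := liftHom_trc _ _ i

@[simp] theorem projTwo_trc (i : Fin 3) :
    projTwo (trc i) = if i = 0 then 1 else trc () := liftHom_trc _ _ i

open Classical in
/-- The universal map into `F3M` induced by a pair of maps into `NatTM`. -/
noncomputable def prodLift {E : Type} {I : Set (E × E)}
    (f g : TraceMonoid E I →* NatTM) : TraceMonoid E I →* F3M :=
  liftHom (fun e =>
    if f (trc e) = 1 then (if g (trc e) = 1 then 1 else trc 1)
    else (if g (trc e) = 1 then trc 0 else trc 2))
    (fun a b _ => genlike_comm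
      (by split_ifs <;> first | exact Or.inl rfl | exact Or.inr ⟨_, rfl⟩)
      (by split_ifs <;> first | exact Or.inl rfl | exact Or.inr ⟨_, rfl⟩))

open Classical in
theorem prodLift_trc {E : Type} {I : Set (E × E)}
    (f g : TraceMonoid E I →* NatTM) (e : E) :
    prodLift f g (trc e) =
      if f (trc e) = 1 then (if g (trc e) = 1 then 1 else trc 1)
      else (if g (trc e) = 1 then trc 0 else trc 2) := liftHom_trc _ _ e

/-- The product in `FPCM` of two copies of the free monoid on one generator is the free
commutative monoid on three generators. -/
theorem prod_nat_nat_in_FPCM :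
    ∃ c : BinaryFan natFPCMObj natFPCMObj,
      Nonempty (IsLimit c) ∧ Nonempty (c.pt ≅ freeComm3) := by
  classical
  have hb1 : IsBasic (projOne : TraceMonoid freeComm3.E freeComm3.I →*
      TraceMonoid natFPCMObj.E natFPCMObj.I) := by
    intro i
    by_cases h : i = 1
    · right; simp [h]
    · left; exact ⟨(), by simp [h]⟩
  have hb2 : IsBasic (projTwo : TraceMonoid freeComm3.E freeComm3.I →*
      TraceMonoid natFPCMObj.E natFPCMObj.I) := by
    intro i
    by_cases h : i = 0
    · right; simp [h]
    · left; exact ⟨(), by simp [h]⟩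
  let c : BinaryFan natFPCMObj natFPCMObj :=
    BinaryFan.mk (P := freeComm3) ⟨projOne, hb1⟩ ⟨projTwo, hb2⟩
  refine ⟨c, ⟨?_⟩, ⟨Iso.refl _⟩⟩
  refine BinaryFan.isLimitMk
    (fun s => (⟨prodLift s.fst.1 s.snd.1, ?_⟩ : s.pt ⟶ freeComm3)) ?fac_left ?fac_right ?uniq
  · show IsBasic (prodLift (E := s.pt.E) (I := s.pt.I) s.fst.1 s.snd.1)
    intro e
    erw [prodLift_trc]
    split_ifs with h1 h2 h2
    · exact Or.inr rfl
    · exact Or.inl ⟨1, rfl⟩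
    · exact Or.inl ⟨0, rfl⟩
    · exact Or.inl ⟨2, rfl⟩
  case fac_left =>
    intro s
    apply Subtype.ext
    apply traceHom_ext
    intro e
    have hf : s.fst.1 (trc e) = 1 ∨ s.fst.1 (trc e) = trc () := by
      rcases s.fst.2 e with ⟨⟨⟩, h⟩ | h
      exacts [Or.inr h, Or.inl h]
    show projOne (prodLift s.fst.1 s.snd.1 (trc e)) = s.fst.1 (trc e)
    erw [prodLift_trc]
    split_ifs with h1 h2 h2
    · rw [map_one]; exact h1.symm
    · rw [projOne_trc, if_pos rfl]; exact h1.symm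
    · rw [projOne_trc, if_neg (by decide)]
      rcases hf with h | h
      · exact absurd h h1
      · exact h.symm
    · rw [projOne_trc, if_neg (by decide)]
      rcases hf with h | h
      · exact absurd h h1
      · exact h.symm
  case fac_right =>
    intro s
    apply Subtype.ext
    apply traceHom_ext
    intro e
    have hg : s.snd.1 (trc e) = 1 ∨ s.snd.1 (trc e) = trc () := by
      rcases s.snd.2 e with ⟨⟨⟩, h⟩ | h
      exacts [Or.inr h, Or.inl h]
    show projTwo (prodLift s.fst.1 s.snd.1 (trc e)) = s.snd.1 (trc e)
    erw [prodLift_trc]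
    split_ifs with h1 h2 h2
    · rw [map_one]; exact h2.symm
    · rw [projTwo_trc, if_neg (by decide)]
      rcases hg with h | h
      · exact absurd h h2
      · exact h.symm
    · rw [projTwo_trc, if_pos rfl]; exact h2.symm
    · rw [projTwo_trc, if_neg (by decide)]
      rcases hg with h | h
      · exact absurd h h2
      · exact h.symm
  case uniq =>
    intro s m hm1 hm2
    apply Subtype.ext
    apply traceHom_ext
    intro e
    have e1 : projOne (m.1 (trc e)) = s.fst.1 (trc e) :=
      DFunLike.congr_fun (congrArg Subtype.val hm1) (trc e)
    have e2 : projTwo (m.1 (trc e)) = s.snd.1 (trc e) :=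
      DFunLike.congr_fun (congrArg Subtype.val hm2) (trc e)
    show m.1 (trc e) = prodLift s.fst.1 s.snd.1 (trc e)
    erw [prodLift_trc]
    rcases m.2 e with ⟨i, hi⟩ | h1
    · rw [hi] at e1 e2 ⊢
      have hI : ∀ j : Fin 3, j = 0 ∨ j = 1 ∨ j = 2 := by decide
      rcases hI i with rfl | rfl | rfl
      · erw [projOne_trc, if_neg (by decide)] at e1
        erw [projTwo_trc, if_pos rfl] at e2
        split_ifs with a b b
        · exact absurd (e1.trans a) (trc_ne_one ())
        · exact absurd (e1.trans a) (trc_ne_one ())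
        · rfl
        · exact absurd e2.symm b
      · erw [projOne_trc, if_pos rfl] at e1
        erw [projTwo_trc, if_neg (by decide)] at e2
        split_ifs with a b b
        · exact absurd (e2.trans b) (trc_ne_one ())
        · rfl
        · exact absurd e1.symm a
        · exact absurd e1.symm a
      · erw [projOne_trc, if_neg (by decide)] at e1
        erw [projTwo_trc, if_neg (by decide)] at e2
        split_ifs with a b b
        · exact absurd (e1.trans a) (trc_ne_one ())
        · exact absurd (e1.trans a) (trc_ne_one ())
        · exact absurd (e2.trans b) (trc_ne_one ())
        · rfl
    · erw [h1, map_one] at e1 e2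
      rw [h1]
      split_ifs with a b b
      · rfl
      · exact absurd e2.symm b
      · exact absurd e1.symm a
      · exact absurd e1.symm a
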